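/- Let K(x) = sin(πx/2)/(πx) for x ≠ 0, K(0) = 1/2, and let (c_i) be the determinantal process on ℤ with kernel K(i-j). Then for distinct integers i, j with |i-j| > 1, Cov(c_i c_{i+1}, c_j c_{j+1}) = E(c_i c_{i+1} c_j c_{j+1}) - E(c_i c_{i+1})·E(c_j c_{j+1}) satisfies |Cov(c_i c_{i+1}, c_j c_{j+1})| ≤ C/(i-j)² for an absolute constant C. -/

import Mathlib

open MeasureTheory Real

/-- The discrete sine kernel at angle `π/2`. -/
noncomputable def sineKernel (x : ℤ) : ℝ :=
  if x = 0 then 1 / 2 else Real.sin (π * x / 2) / (π * x)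

lemma sineKernel_decay (m : ℤ) (hm : m ≠ 0) :
    |sineKernel m| ≤ 1 / (π * |(m : ℝ)|) := by
  have hmpos : (0 : ℝ) < |(m : ℝ)| := by
    simp only [abs_pos, Int.cast_ne_zero]; exact hm
  have hπ : (0 : ℝ) < π := Real.pi_pos
  rw [sineKernel, if_neg hm, abs_div]
  rw [show |π * (m : ℝ)| = π * |(m : ℝ)| by
    rw [abs_mul, abs_of_pos hπ]]
  have hden : (0 : ℝ) < π * |(m : ℝ)| := by positivity
  rw [div_le_div_iff₀ hden hden]
  nlinarith [Real.abs_sin_le_one (π * (m : ℝ) / 2), abs_nonneg (Real.sin (π * (m : ℝ) / 2))]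

lemma sineKernel_abs_le_half (m : ℤ) : |sineKernel m| ≤ 1 / 2 := by
  by_cases hm : m = 0
  · subst hm; rw [sineKernel]; rw [if_pos rfl, abs_of_nonneg (by norm_num)]
  · have h1 : (1 : ℝ) ≤ |(m : ℝ)| := by
      have := Int.one_le_abs hm
      calc (1:ℝ) ≤ ((|m| : ℤ) : ℝ) := by exact_mod_cast this
        _ = |(m : ℝ)| := by push_cast [Int.cast_abs]; ring
    refine (sineKernel_decay m hm).trans ?_
    have hπ : (2 : ℝ) ≤ π := by linarith [Real.pi_gt_three]
    have h2 : (2 : ℝ) ≤ π * |(m : ℝ)| := by nlinarith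
    rw [div_le_div_iff₀ (by linarith) (by norm_num)]
    linarith

lemma sineKernel_le_inv {m : ℤ} {D : ℝ} (hD : 2 ≤ D) (hm : D - 1 ≤ |(m : ℝ)|) :
    |sineKernel m| ≤ 1 / D := by
  have hm0 : m ≠ 0 := by
    intro h; subst h; simp at hm; linarith
  have hπ : (2 : ℝ) ≤ π := by linarith [Real.pi_gt_three]
  refine (sineKernel_decay m hm0).trans ?_
  have h1 : D ≤ π * |(m : ℝ)| := by nlinarith
  rw [div_le_div_iff₀ (by nlinarith) (by linarith)]
  linarith

lemma mono4 {a b x y D : ℝ} (hD : 0 < D) (ha : |a| ≤ 1/2) (hb : |b| ≤ 1/2)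
    (hx : |x| ≤ 1/D) (hy : |y| ≤ 1/D) : |a * b * x * y| ≤ 1 / (4 * D^2) := by
  calc |a * b * x * y| = |a| * |b| * |x| * |y| := by
        rw [abs_mul, abs_mul, abs_mul]
    _ ≤ (1/2) * (1/2) * (1/D) * (1/D) := by
        gcongr <;> first | positivity | exact abs_nonneg _
    _ = 1 / (4 * D^2) := by ring

lemma delta_bound (a b b' x1 x2 x3 y1 y2 y3 D : ℝ) (hD : 2 ≤ D)
    (ha : |a| ≤ 1/2) (hb : |b| ≤ 1/2) (hb' : |b'| ≤ 1/2)
    (hx1 : |x1| ≤ 1/D) (hx2 : |x2| ≤ 1/D) (hx3 : |x3| ≤ 1/D)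
    (hy1 : |y1| ≤ 1/D) (hy2 : |y2| ≤ 1/D) (hy3 : |y3| ≤ 1/D) :
    |Matrix.det !![a, b', x1, x2; b, a, x3, x1; y1, y2, a, b'; y3, y1, b, a]
      - (a * a - b' * b) * (a * a - b' * b)| ≤ 5 / D^2 := by
  have hD0 : (0 : ℝ) < D := by linarith
  have hhalf : ∀ z : ℝ, |z| ≤ 1/D → |z| ≤ 1/2 := by
    intro z hz
    refine hz.trans ?_
    rw [div_le_div_iff₀ hD0 (by norm_num)]; linarith
  have m1 := mono4 hD0 ha hb' hx3 hy1
  have m2 := mono4 hD0 ha hb' hx1 hy3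
  have m3 := mono4 hD0 ha hb hy2 hx1
  have m4 := mono4 hD0 ha hb hy1 hx2
  have m5 := mono4 hD0 ha ha hx3 hy2
  have m6 := mono4 hD0 ha ha hy1 hx1
  have m7 := mono4 hD0 ha ha hy3 hx2
  have m8 := mono4 hD0 hb' hb hy1 hx1
  have m9 := mono4 hD0 hb' hb' hx3 hy3
  have m10 := mono4 hD0 hb hb hy2 hx2
  have m11 := mono4 hD0 (hhalf _ hx3) (hhalf _ hy2) hy3 hx2
  have m12 := mono4 hD0 (hhalf _ hx3) (hhalf _ hy1) hy1 hx2
  have m13 := mono4 hD0 (hhalf _ hy2) (hhalf _ hx1) hx1 hy3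
  have m14 := mono4 hD0 (hhalf _ hy1) (hhalf _ hy1) hx1 hx1
  have hΔ : Matrix.det !![a, b', x1, x2; b, a, x3, x1; y1, y2, a, b'; y3, y1, b, a]
      - (a * a - b' * b) * (a * a - b' * b) =
      2*(a*b'*x3*y1) + 2*(a*b'*x1*y3) + 2*(a*b*y2*x1) + 2*(a*b*y1*x2)
      - (a*a*x3*y2) - 2*(a*a*y1*x1) - (a*a*y3*x2) - 2*(b'*b*y1*x1)
      - (b'*b'*x3*y3) - (b*b*y2*x2) + (x3*y2*y3*x2) - (x3*y1*y1*x2)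
      - (y2*x1*x1*y3) + (y1*y1*x1*x1) := by
    rw [Matrix.det_succ_row_zero]
    simp [Fin.sum_univ_succ, Matrix.det_fin_three, Matrix.submatrix, Fin.succAbove,
      show (Fin.castSucc 2 : Fin 4) = 2 from rfl]
    ring
  rw [hΔ]
  have hE : (1:ℝ) / (4 * D^2) * 20 = 5 / D^2 := by ring
  obtain ⟨l1, u1⟩ := abs_le.1 m1
  obtain ⟨l2, u2⟩ := abs_le.1 m2
  obtain ⟨l3, u3⟩ := abs_le.1 m3
  obtain ⟨l4, u4⟩ := abs_le.1 m4
  obtain ⟨l5, u5⟩ := abs_le.1 m5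
  obtain ⟨l6, u6⟩ := abs_le.1 m6
  obtain ⟨l7, u7⟩ := abs_le.1 m7
  obtain ⟨l8, u8⟩ := abs_le.1 m8
  obtain ⟨l9, u9⟩ := abs_le.1 m9
  obtain ⟨l10, u10⟩ := abs_le.1 m10
  obtain ⟨l11, u11⟩ := abs_le.1 m11
  obtain ⟨l12, u12⟩ := abs_le.1 m12
  obtain ⟨l13, u13⟩ := abs_le.1 m13
  obtain ⟨l14, u14⟩ := abs_le.1 m14
  rw [abs_le]
  constructor <;> linarith

lemma det_pair (u v : ℤ) (huv : u ≠ v) :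
    Matrix.det (Matrix.of fun a b : ({u, v} : Finset ℤ) => sineKernel (↑a - ↑b)) =
      sineKernel 0 * sineKernel 0 - sineKernel (u - v) * sineKernel (v - u) := by
  have hvu : v ≠ u := huv.symm
  have hu : u ∈ ({u, v} : Finset ℤ) := by simp
  have hv : v ∈ ({u, v} : Finset ℤ) := by simp
  let e : Fin 2 ≃ ({u, v} : Finset ℤ) :=
    { toFun := ![⟨u, hu⟩, ⟨v, hv⟩]
      invFun := fun x => if (x : ℤ) = u then 0 else 1
      left_inv := by intro p; fin_cases p <;> simp [hvu]
      right_inv := by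
        rintro ⟨x, hx⟩
        simp only [Finset.mem_insert, Finset.mem_singleton] at hx
        rcases hx with rfl | rfl <;> simp [hvu] }
  rw [← Matrix.det_submatrix_equiv_self e, show
    (Matrix.of fun a b : ({u, v} : Finset ℤ) => sineKernel (↑a - ↑b)).submatrix e e =
      !![sineKernel (u - u), sineKernel (u - v); sineKernel (v - u), sineKernel (v - v)] by
    ext p q; fin_cases p <;> fin_cases q <;> rfl]
  rw [Matrix.det_fin_two_of]
  simp

lemma det_quad (u v w z : ℤ) (huv : u ≠ v) (huw : u ≠ w) (huz : u ≠ z)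
    (hvw : v ≠ w) (hvz : v ≠ z) (hwz : w ≠ z) :
    Matrix.det (Matrix.of fun a b : ({u, v, w, z} : Finset ℤ) => sineKernel (↑a - ↑b)) =
      Matrix.det !![sineKernel (u-u), sineKernel (u-v), sineKernel (u-w), sineKernel (u-z);
                    sineKernel (v-u), sineKernel (v-v), sineKernel (v-w), sineKernel (v-z);
                    sineKernel (w-u), sineKernel (w-v), sineKernel (w-w), sineKernel (w-z);
                    sineKernel (z-u), sineKernel (z-v), sineKernel (z-w), sineKernel (z-z)] := by
  have hvu : v ≠ u := huv.symm
  have hwu : w ≠ u := huw.symm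
  have hwv : w ≠ v := hvw.symm
  have hzu : z ≠ u := huz.symm
  have hzv : z ≠ v := hvz.symm
  have hzw : z ≠ w := hwz.symm
  have hu : u ∈ ({u, v, w, z} : Finset ℤ) := by simp
  have hv : v ∈ ({u, v, w, z} : Finset ℤ) := by simp
  have hw : w ∈ ({u, v, w, z} : Finset ℤ) := by simp
  have hz : z ∈ ({u, v, w, z} : Finset ℤ) := by simp
  let e : Fin 4 ≃ ({u, v, w, z} : Finset ℤ) :=
    { toFun := ![⟨u, hu⟩, ⟨v, hv⟩, ⟨w, hw⟩, ⟨z, hz⟩]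
      invFun := fun x => if (x : ℤ) = u then 0 else if (x : ℤ) = v then 1
        else if (x : ℤ) = w then 2 else 3
      left_inv := by intro p; fin_cases p <;> simp [hvu, hwu, hwv, hzu, hzv, hzw]
      right_inv := by
        rintro ⟨x, hx⟩
        simp only [Finset.mem_insert, Finset.mem_singleton] at hx
        rcases hx with rfl | rfl | rfl | rfl <;> simp [hvu, hwu, hwv, hzu, hzv, hzw] }
  rw [← Matrix.det_submatrix_equiv_self e]
  congr 1
  ext p q
  fin_cases p <;> fin_cases q <;> rfl

theorem sine_process_pattern_covariance_decay
    {Ω : Type*} [MeasureSpace Ω] (μ : Measure Ω) [IsProbabilityMeasure μ]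
    (c : ℤ → Ω → ℝ) (hc01 : ∀ i ω, c i ω = 0 ∨ c i ω = 1)
    (hmeas : ∀ i, Measurable (c i))
    (hcorr : ∀ A : Finset ℤ,
      (∫ ω, ∏ i ∈ A, c i ω ∂μ) = Matrix.det (Matrix.of fun a b : A => sineKernel (a - b))) :
    ∃ C : ℝ, 0 < C ∧ ∀ i j : ℤ, 1 < |i - j| →
      |(∫ ω, c i ω * c (i + 1) ω * (c j ω * c (j + 1) ω) ∂μ) -
          (∫ ω, c i ω * c (i + 1) ω ∂μ) * (∫ ω, c j ω * c (j + 1) ω ∂μ)| ≤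
        C / ((i : ℝ) - j) ^ 2 := by
  refine ⟨5, by norm_num, fun i j hij => ?_⟩
  have hd : 2 ≤ i - j ∨ i - j ≤ -2 := by
    rcases abs_cases (i - j) with ⟨h1, h2⟩ | ⟨h1, h2⟩ <;> omega
  -- distinctness
  have h_ii1 : i ≠ i + 1 := by omega
  have h_ij : i ≠ j := by omega
  have h_ij1 : i ≠ j + 1 := by omega
  have h_i1j : i + 1 ≠ j := by omega
  have h_i1j1 : i + 1 ≠ j + 1 := by omega
  have h_jj1 : j ≠ j + 1 := by omega
  -- two-point expectations
  have E2i : (∫ ω, c i ω * c (i + 1) ω ∂μ) =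
      sineKernel 0 * sineKernel 0 - sineKernel (i - (i+1)) * sineKernel ((i+1) - i) := by
    rw [show (fun ω => c i ω * c (i + 1) ω) = fun ω => ∏ x ∈ ({i, i+1} : Finset ℤ), c x ω by
      funext ω; rw [Finset.prod_pair h_ii1]]
    rw [hcorr, det_pair _ _ h_ii1]
  have E2j : (∫ ω, c j ω * c (j + 1) ω ∂μ) =
      sineKernel 0 * sineKernel 0 - sineKernel (j - (j+1)) * sineKernel ((j+1) - j) := by
    rw [show (fun ω => c j ω * c (j + 1) ω) = fun ω => ∏ x ∈ ({j, j+1} : Finset ℤ), c x ω by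
      funext ω; rw [Finset.prod_pair h_jj1]]
    rw [hcorr, det_pair _ _ h_jj1]
  -- four-point expectation
  have hmem1 : i ∉ ({i+1, j, j+1} : Finset ℤ) := by simp [h_ii1, h_ij, h_ij1]
  have hmem2 : i + 1 ∉ ({j, j+1} : Finset ℤ) := by simp [h_i1j, h_i1j1]
  have E4 : (∫ ω, c i ω * c (i + 1) ω * (c j ω * c (j + 1) ω) ∂μ) =
      Matrix.det (Matrix.of fun a b : ({i, i+1, j, j+1} : Finset ℤ) =>
        sineKernel (↑a - ↑b)) := by
    rw [show (fun ω => c i ω * c (i + 1) ω * (c j ω * c (j + 1) ω)) =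
        fun ω => ∏ x ∈ ({i, i+1, j, j+1} : Finset ℤ), c x ω by
      funext ω
      rw [Finset.prod_insert hmem1, Finset.prod_insert hmem2, Finset.prod_pair h_jj1]
      ring]
    rw [hcorr]
  rw [E4, det_quad _ _ _ _ h_ii1 h_ij h_ij1 h_i1j h_i1j1 h_jj1, E2i, E2j]
  -- set up abbreviations
  set D : ℝ := |(i : ℝ) - j| with hDdef
  have hD2 : (2 : ℝ) ≤ D := by
    rcases hd with h | h
    · have : (2 : ℝ) ≤ (i : ℝ) - j := by exact_mod_cast h
      calc (2:ℝ) ≤ (i : ℝ) - j := this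
        _ ≤ D := le_abs_self _
    · have : (i : ℝ) - j ≤ -2 := by exact_mod_cast h
      calc (2:ℝ) ≤ -((i : ℝ) - j) := by linarith
        _ ≤ D := neg_le_abs _
  have habs : ∀ m : ℤ, D - 1 ≤ |(m : ℝ)| → |sineKernel m| ≤ 1 / D :=
    fun m hm => sineKernel_le_inv hD2 hm
  have hij' : ((i - j : ℤ) : ℝ) = (i : ℝ) - j := by push_cast; ring
  have habs_d : |((i - j : ℤ) : ℝ)| = D := by rw [hij', hDdef]
  have hx1 : |sineKernel (i - j)| ≤ 1 / D := habs _ (by rw [habs_d]; linarith)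
  have hx2 : |sineKernel (i - (j+1))| ≤ 1 / D := habs _ (by
    have : ((i - (j+1) : ℤ) : ℝ) = ((i : ℝ) - j) - 1 := by push_cast; ring
    rw [this]
    calc D - 1 = |(i : ℝ) - j| - |(1:ℝ)| := by rw [hDdef]; norm_num
      _ ≤ |((i : ℝ) - j) - 1| := abs_sub_abs_le_abs_sub _ _)
  have hx3 : |sineKernel (i + 1 - j)| ≤ 1 / D := habs _ (by
    have : ((i + 1 - j : ℤ) : ℝ) = ((i : ℝ) - j) + 1 := by push_cast; ring
    rw [this]
    calc D - 1 = |(i : ℝ) - j| - |(-1:ℝ)| := by rw [hDdef]; norm_num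
      _ ≤ |((i : ℝ) - j) - (-1)| := abs_sub_abs_le_abs_sub _ _
      _ = |((i : ℝ) - j) + 1| := by ring_nf)
  have hy1 : |sineKernel (j - i)| ≤ 1 / D := habs _ (by
    have : ((j - i : ℤ) : ℝ) = -(((i : ℝ) - j)) := by push_cast; ring
    rw [this, abs_neg]; rw [hDdef]; linarith [le_refl D])
  have hy2 : |sineKernel (j - (i+1))| ≤ 1 / D := habs _ (by
    have : ((j - (i+1) : ℤ) : ℝ) = -(((i : ℝ) - j) + 1) := by push_cast; ring
    rw [this, abs_neg]
    calc D - 1 = |(i : ℝ) - j| - |(-1:ℝ)| := by rw [hDdef]; norm_num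
      _ ≤ |((i : ℝ) - j) - (-1)| := abs_sub_abs_le_abs_sub _ _
      _ = |((i : ℝ) - j) + 1| := by ring_nf)
  have hy3 : |sineKernel (j + 1 - i)| ≤ 1 / D := habs _ (by
    have : ((j + 1 - i : ℤ) : ℝ) = -(((i : ℝ) - j) - 1) := by push_cast; ring
    rw [this, abs_neg]
    calc D - 1 = |(i : ℝ) - j| - |(1:ℝ)| := by rw [hDdef]; norm_num
      _ ≤ |((i : ℝ) - j) - 1| := abs_sub_abs_le_abs_sub _ _)
  have ha := sineKernel_abs_le_half 0
  have hb := sineKernel_abs_le_half 1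
  have hb' := sineKernel_abs_le_half (-1)
  -- normalize entries
  have key := delta_bound (sineKernel 0) (sineKernel 1) (sineKernel (-1))
    (sineKernel (i - j)) (sineKernel (i - (j+1))) (sineKernel (i + 1 - j))
    (sineKernel (j - i)) (sineKernel (j - (i+1))) (sineKernel (j + 1 - i))
    D hD2 ha hb hb' hx1 hx2 hx3 hy1 hy2 hy3
  have hDsq : D ^ 2 = ((i : ℝ) - j) ^ 2 := by rw [hDdef, sq_abs]
  rw [hDsq] at key
  -- rewrite the goal entries to match key
  have e1 : i - i = (0 : ℤ) := by ring
  have e2 : i - (i + 1) = (-1 : ℤ) := by ring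
  have e3 : i + 1 - i = (1 : ℤ) := by ring
  have e4 : i + 1 - (i + 1) = (0 : ℤ) := by ring
  have e5 : j - j = (0 : ℤ) := by ring
  have e6 : j - (j + 1) = (-1 : ℤ) := by ring
  have e7 : j + 1 - j = (1 : ℤ) := by ring
  have e8 : j + 1 - (j + 1) = (0 : ℤ) := by ring
  have e9 : i + 1 - (j + 1) = i - j := by ring
  have e10 : j + 1 - (i + 1) = j - i := by ring
  rw [e1, e2, e3, e4, e5, e6, e7, e8, e9, e10]
  convert key using 3 <;> ring
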